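/- For p⁺ > 0 and p⁻ ∈ ℝ, the sesquilinear form on V₊^{p⁺,p⁻} determined by ⟨|r⟩, |s⟩⟩ = (2p⁺)^r · r! · δ_{r,s} is a positive definite Hermitian inner product and satisfies the contravariance relations ⟨ρ(J⁺)u, v⟩ = −⟨u, ρ(J⁻)v⟩, ⟨ρ(J⁻)u, v⟩ = −⟨u, ρ(J⁺)v⟩, ⟨ρ(J)u, v⟩ = −⟨u, ρ(J)v⟩, and ⟨ρ(T)u, v⟩ = −⟨u, ρ(T)v⟩ for all u, v ∈ V₊^{p⁺,p⁻}; i.e. V₊^{p⁺,p⁻} is a unitary representation of 𝔫𝔴. -/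

import Mathlib

/-!
For `p⁺, p⁻ ∈ ℝ`, `V₊^{p⁺,p⁻}` is the complex vector space with basis
`{|r⟩ : r ∈ ℕ}` (modelled as `ℕ →₀ ℂ`, `|r⟩ = single r 1`) with operators
`ρ(T)|r⟩ = ip⁺|r⟩`, `ρ(J)|r⟩ = i(p⁻ − r)|r⟩`, `ρ(J⁻)|r⟩ = i|r+1⟩`,
`ρ(J⁺)|r⟩ = 2ip⁺r|r−1⟩` (so `ρ(J⁺)|0⟩ = 0`), and the sesquilinear form
determined by `⟨|r⟩, |s⟩⟩ = (2p⁺)^r · r! · δ_{r,s}`.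
-/

/-- The basis vector `|r⟩` of `V₊^{p⁺,p⁻}`. -/
noncomputable def ket (r : ℕ) : ℕ →₀ ℂ := Finsupp.single r 1

/-- Linear extension of a map defined on the basis `{|r⟩}`. -/
noncomputable def opOf (g : ℕ → (ℕ →₀ ℂ)) : (ℕ →₀ ℂ) →ₗ[ℂ] (ℕ →₀ ℂ) :=
  Finsupp.lsum ℂ fun r => LinearMap.toSpanSingleton ℂ (ℕ →₀ ℂ) (g r)

/-- `ρ(T)`. -/
noncomputable def rhoT (pp : ℝ) : (ℕ →₀ ℂ) →ₗ[ℂ] (ℕ →₀ ℂ) :=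
  opOf fun r => (Complex.I * (pp : ℂ)) • ket r

/-- `ρ(J)`. -/
noncomputable def rhoJ (pm : ℝ) : (ℕ →₀ ℂ) →ₗ[ℂ] (ℕ →₀ ℂ) :=
  opOf fun r => (Complex.I * ((pm : ℂ) - (r : ℂ))) • ket r

/-- `ρ(J⁻)`. -/
noncomputable def rhoJminus : (ℕ →₀ ℂ) →ₗ[ℂ] (ℕ →₀ ℂ) :=
  opOf fun r => Complex.I • ket (r + 1)

/-- `ρ(J⁺)`. -/
noncomputable def rhoJplus (pp : ℝ) : (ℕ →₀ ℂ) →ₗ[ℂ] (ℕ →₀ ℂ) :=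
  opOf fun r => (2 * Complex.I * (pp : ℂ) * (r : ℂ)) • ket (r - 1)

/-- The sesquilinear form on `V₊^{p⁺,p⁻}` determined by
`⟨|r⟩, |s⟩⟩ = (2p⁺)^r · r! · δ_{r,s}` (conjugate-linear in the first argument). -/
noncomputable def form (pp : ℝ) (u v : ℕ →₀ ℂ) : ℂ :=
  u.sum fun r a => (starRingEnd ℂ) a * v r * ((2 * pp : ℝ) : ℂ) ^ r * (r.factorial : ℂ)

lemma form_zero_left (pp : ℝ) (v : ℕ →₀ ℂ) : form pp 0 v = 0 := by
  simp [form]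

lemma form_zero_right (pp : ℝ) (u : ℕ →₀ ℂ) : form pp u 0 = 0 := by
  simp [form, Finsupp.sum]

lemma form_add_left (pp : ℝ) (u u' v : ℕ →₀ ℂ) :
    form pp (u + u') v = form pp u v + form pp u' v := by
  unfold form
  apply Finsupp.sum_add_index' <;> intros <;> simp [add_mul, map_add]

lemma form_smul_left (pp : ℝ) (a : ℂ) (u v : ℕ →₀ ℂ) :
    form pp (a • u) v = (starRingEnd ℂ) a * form pp u v := by
  unfold form
  rw [Finsupp.sum_smul_index (by intro r; simp), Finsupp.mul_sum]
  exact Finsupp.sum_congr fun r _ => by simp [map_mul]; ring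

lemma form_add_right (pp : ℝ) (u v v' : ℕ →₀ ℂ) :
    form pp u (v + v') = form pp u v + form pp u v' := by
  unfold form
  simp only [Finsupp.add_apply]
  rw [← Finsupp.sum_add]
  exact Finsupp.sum_congr fun r _ => by ring

lemma form_smul_right (pp : ℝ) (a : ℂ) (u v : ℕ →₀ ℂ) :
    form pp u (a • v) = a * form pp u v := by
  unfold form
  simp only [Finsupp.smul_apply, smul_eq_mul]
  rw [Finsupp.mul_sum]
  exact Finsupp.sum_congr fun r _ => by ring

lemma form_eq_sum (pp : ℝ) (u v : ℕ →₀ ℂ) (s : Finset ℕ) (hs : u.support ⊆ s) :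
    form pp u v
      = ∑ r ∈ s, (starRingEnd ℂ) (u r) * v r * ((2 * pp : ℝ) : ℂ) ^ r * (r.factorial : ℂ) := by
  unfold form Finsupp.sum
  apply Finset.sum_subset hs
  intro r _ hr
  simp [Finsupp.notMem_support_iff.mp hr]

lemma form_conj (pp : ℝ) (u v : ℕ →₀ ℂ) : form pp u v = (starRingEnd ℂ) (form pp v u) := by
  rw [form_eq_sum pp u v (u.support ∪ v.support) Finset.subset_union_left,
    form_eq_sum pp v u (u.support ∪ v.support) Finset.subset_union_right, map_sum]
  refine Finset.sum_congr rfl fun r _ => ?_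
  simp only [map_mul, Complex.conj_conj, Complex.conj_ofReal, ← Complex.ofReal_pow,
    map_natCast]
  ring

lemma opOf_ket (g : ℕ → (ℕ →₀ ℂ)) (r : ℕ) : opOf g (ket r) = g r := by
  simp [opOf, ket]

lemma form_ket_left (pp : ℝ) (r : ℕ) (v : ℕ →₀ ℂ) :
    form pp (ket r) v = v r * ((2 * pp : ℝ) : ℂ) ^ r * (r.factorial : ℂ) := by
  unfold form ket
  rw [Finsupp.sum_single_index] <;> simp

lemma form_ket_ket (pp : ℝ) (r s : ℕ) :
    form pp (ket r) (ket s)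
      = if r = s then ((2 * pp : ℝ) : ℂ) ^ r * (r.factorial : ℂ) else 0 := by
  rw [form_ket_left]
  simp [ket, Finsupp.single_apply]
  by_cases h : r = s <;> simp [h, eq_comm]

lemma contravar (pp : ℝ) (A B : (ℕ →₀ ℂ) →ₗ[ℂ] (ℕ →₀ ℂ))
    (h : ∀ r s, form pp (A (ket r)) (ket s) = -form pp (ket r) (B (ket s))) :
    ∀ u v, form pp (A u) v = -form pp u (B v) := by
  intro u v
  induction u using Finsupp.induction_linear generalizing v with
  | zero => simp [form_zero_left, form_zero_right]
  | add f g hf hg => simp only [map_add, form_add_left, hf, hg]; ring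
  | single r a =>
    induction v using Finsupp.induction_linear with
    | zero => simp [form_zero_left, form_zero_right]
    | add f g hf hg => simp only [map_add, form_add_right, hf, hg]; ring
    | single s b =>
      have hr : (Finsupp.single r a : ℕ →₀ ℂ) = a • ket r := by
        simp [ket, Finsupp.smul_single]
      have hs : (Finsupp.single s b : ℕ →₀ ℂ) = b • ket s := by
        simp [ket, Finsupp.smul_single]
      rw [hr, hs, map_smul, map_smul, form_smul_left, form_smul_right, form_smul_left,
        form_smul_right, h r s]
      ring

lemma key_plus (pp : ℝ) (r s : ℕ) :
    form pp (rhoJplus pp (ket r)) (ket s) = -form pp (ket r) (rhoJminus (ket s)) := by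
  rw [rhoJplus, rhoJminus, opOf_ket, opOf_ket, form_smul_left, form_smul_right,
    form_ket_ket, form_ket_ket]
  rcases r with _ | t
  · simp
  · by_cases hts : t = s
    · subst hts
      simp only [Nat.add_sub_cancel, if_pos rfl, map_mul, Complex.conj_I, Complex.conj_ofReal,
        map_natCast, map_ofNat]
      push_cast [Nat.factorial_succ, pow_succ]
      ring
    · simp [Nat.add_sub_cancel, hts, fun h : t + 1 = s + 1 => hts (Nat.succ_injective h)]

lemma key_minus (pp : ℝ) (r s : ℕ) :
    form pp (rhoJminus (ket r)) (ket s) = -form pp (ket r) (rhoJplus pp (ket s)) := by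
  rw [rhoJplus, rhoJminus, opOf_ket, opOf_ket, form_smul_left, form_smul_right,
    form_ket_ket, form_ket_ket]
  rcases s with _ | t
  · simp
  · by_cases hts : r = t
    · subst hts
      simp only [Nat.add_sub_cancel, if_pos rfl, Complex.conj_I]
      push_cast [Nat.factorial_succ, pow_succ]
      ring
    · simp [Nat.add_sub_cancel, hts, fun h : r + 1 = t + 1 => hts (Nat.succ_injective h)]

lemma key_J (pp pm : ℝ) (r s : ℕ) :
    form pp (rhoJ pm (ket r)) (ket s) = -form pp (ket r) (rhoJ pm (ket s)) := by
  unfold rhoJ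
  rw [opOf_ket, opOf_ket, form_smul_left, form_smul_right, form_ket_ket]
  by_cases h : r = s
  · subst h
    simp only [if_pos rfl, map_mul, map_sub, Complex.conj_I, Complex.conj_ofReal, map_natCast]
    ring
  · simp [h]

lemma key_T (pp : ℝ) (r s : ℕ) :
    form pp (rhoT pp (ket r)) (ket s) = -form pp (ket r) (rhoT pp (ket s)) := by
  unfold rhoT
  rw [opOf_ket, opOf_ket, form_smul_left, form_smul_right, form_ket_ket]
  by_cases h : r = s
  · subst h
    simp only [if_pos rfl, map_mul, Complex.conj_I, Complex.conj_ofReal]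
    ring
  · simp [h]

open ComplexOrder in
lemma form_pos (pp : ℝ) (hpp : 0 < pp) (u : ℕ →₀ ℂ) (hu : u ≠ 0) : 0 < form pp u u := by
  unfold form Finsupp.sum
  apply Finset.sum_pos
  · intro r hr
    have h1 : u r ≠ 0 := Finsupp.mem_support_iff.mp hr
    have h2 : (starRingEnd ℂ) (u r) * u r = (Complex.normSq (u r) : ℂ) := by
      rw [mul_comm, Complex.mul_conj]
    dsimp only
    rw [h2, ← Complex.ofReal_natCast, ← Complex.ofReal_pow, ← Complex.ofReal_mul,
      ← Complex.ofReal_mul, Complex.zero_lt_real]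
    have := Complex.normSq_pos.mpr h1
    have := r.factorial_pos
    positivity
  · exact Finsupp.support_nonempty_iff.mpr hu

open ComplexOrder in
/-- For `p⁺ > 0`, the form `⟨|r⟩, |s⟩⟩ = (2p⁺)^r r! δ_{r,s}` is a positive definite
Hermitian inner product on `V₊^{p⁺,p⁻}`, sesquilinear, and contravariant:
`⟨ρ(J⁺)u, v⟩ = −⟨u, ρ(J⁻)v⟩`, `⟨ρ(J⁻)u, v⟩ = −⟨u, ρ(J⁺)v⟩`,
`⟨ρ(J)u, v⟩ = −⟨u, ρ(J)v⟩`, `⟨ρ(T)u, v⟩ = −⟨u, ρ(T)v⟩`;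
i.e. `V₊^{p⁺,p⁻}` is a unitary representation of 𝔫𝔴. -/
theorem Vplus_unitary (pp pm : ℝ) (hpp : 0 < pp) :
    (∀ u v : ℕ →₀ ℂ, form pp u v = (starRingEnd ℂ) (form pp v u)) ∧
    (∀ (a : ℂ) (u u' v : ℕ →₀ ℂ),
      form pp (a • u + u') v = (starRingEnd ℂ) a * form pp u v + form pp u' v) ∧
    (∀ (a : ℂ) (u v v' : ℕ →₀ ℂ),
      form pp u (a • v + v') = a * form pp u v + form pp u v') ∧
    (∀ u : ℕ →₀ ℂ, u ≠ 0 → 0 < form pp u u) ∧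
    (∀ u v : ℕ →₀ ℂ, form pp (rhoJplus pp u) v = -form pp u (rhoJminus v)) ∧
    (∀ u v : ℕ →₀ ℂ, form pp (rhoJminus u) v = -form pp u (rhoJplus pp v)) ∧
    (∀ u v : ℕ →₀ ℂ, form pp (rhoJ pm u) v = -form pp u (rhoJ pm v)) ∧
    (∀ u v : ℕ →₀ ℂ, form pp (rhoT pp u) v = -form pp u (rhoT pp v)) := by
  refine ⟨form_conj pp, ?_, ?_, form_pos pp hpp,
    contravar pp _ _ (key_plus pp), contravar pp _ _ (key_minus pp),
    contravar pp _ _ (key_J pp pm), contravar pp _ _ (key_T pp)⟩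
  · intro a u u' v
    rw [form_add_left, form_smul_left]
  · intro a u v v'
    rw [form_add_right, form_smul_right]
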